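/- (Increase dimension.) Suppose that A, B, C form a 3-phase s₁ × ⋯ × s_r Golay array triad. Define the 3 × s₁ × ⋯ × s_r arrays U, V, W by stacking: U = [A; B; C], V = [A; ωB; ω²C], W = [A; ω²B; ωC], where for arrays X, Y, Z the stacked array [X; Y; Z] is the 3 × s₁ × ⋯ × s_r array D with D(0, i₁,…,i_r) = X(i₁,…,i_r), D(1, i₁,…,i_r) = Y(i₁,…,i_r), D(2, i₁,…,i_r) = Z(i₁,…,i_r), and D(i, i₁,…,i_r) = 0 for i ∉ {0,1,2}. Then U, V, W form a 3-phase 3 × s₁ × ⋯ × s_r Golay array triad. -/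

import Mathlib

open scoped BigOperators

/-- `ω = e^{2πi/3}`, a primitive cube root of unity. -/
noncomputable def ω : ℂ := Complex.exp (2 * Real.pi * Complex.I / 3)

/-- Aperiodic autocorrelation function of an `r`-dimensional array:
`C_A(u) = Σ_{i ∈ ℤ^r} A(i) conj(A(i+u))`. -/
noncomputable def aperCorrArr {r : ℕ} (A : (Fin r → ℤ) → ℂ) (u : Fin r → ℤ) : ℂ :=
  ∑' i : Fin r → ℤ, A i * (starRingEnd ℂ) (A (i + u))

/-- A 3-phase `s₁ × ⋯ × s_r` array: vanishes whenever some index is out of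
range, and its entries inside the index range lie in `{1, ω, ω²}`. -/
def IsThreePhaseArr (r : ℕ) (s : Fin r → ℕ) (A : (Fin r → ℤ) → ℂ) : Prop :=
  (∀ i : Fin r → ℤ, (∃ k, i k < 0 ∨ (s k : ℤ) ≤ i k) → A i = 0) ∧
    ∀ i : Fin r → ℤ, (∀ k, 0 ≤ i k ∧ i k < (s k : ℤ)) →
      A i ∈ ({1, ω, ω ^ 2} : Set ℂ)

/-- Three 3-phase `s₁ × ⋯ × s_r` arrays forming a 3-phase Golay array triad. -/
def GolayArrTriad (r : ℕ) (s : Fin r → ℕ) (A B C : (Fin r → ℤ) → ℂ) : Prop :=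
  IsThreePhaseArr r s A ∧ IsThreePhaseArr r s B ∧ IsThreePhaseArr r s C ∧
    ∀ u : Fin r → ℤ, u ≠ 0 →
      aperCorrArr A u + aperCorrArr B u + aperCorrArr C u = 0

/-- A `t × s₁ × ⋯ × s_r` array (with the first dimension displayed
explicitly): vanishes whenever some index is out of range. -/
def IsArr1R (t : ℕ) {r : ℕ} (s : Fin r → ℕ) (B : ℤ → (Fin r → ℤ) → ℂ) : Prop :=
  ∀ (i₀ : ℤ) (i : Fin r → ℤ),
    ((i₀ < 0 ∨ (t : ℤ) ≤ i₀) ∨ ∃ k, i k < 0 ∨ (s k : ℤ) ≤ i k) → B i₀ i = 0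

/-- A 3-phase `t × s₁ × ⋯ × s_r` array. -/
def IsThreePhase1R (t : ℕ) {r : ℕ} (s : Fin r → ℕ)
    (B : ℤ → (Fin r → ℤ) → ℂ) : Prop :=
  IsArr1R t s B ∧
    ∀ (i₀ : ℤ) (i : Fin r → ℤ), 0 ≤ i₀ → i₀ < (t : ℤ) →
      (∀ k, 0 ≤ i k ∧ i k < (s k : ℤ)) → B i₀ i ∈ ({1, ω, ω ^ 2} : Set ℂ)

/-- Aperiodic autocorrelation of an array with one explicit leading
dimension. -/
noncomputable def aperCorr1R {r : ℕ} (B : ℤ → (Fin r → ℤ) → ℂ)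
    (u₀ : ℤ) (u : Fin r → ℤ) : ℂ :=
  ∑' p : ℤ × (Fin r → ℤ),
    B p.1 p.2 * (starRingEnd ℂ) (B (p.1 + u₀) (p.2 + u))

/-- Three 3-phase `t × s₁ × ⋯ × s_r` arrays forming a 3-phase Golay array
triad. -/
def GolayTriad1R (t : ℕ) {r : ℕ} (s : Fin r → ℕ)
    (A B C : ℤ → (Fin r → ℤ) → ℂ) : Prop :=
  IsThreePhase1R t s A ∧ IsThreePhase1R t s B ∧ IsThreePhase1R t s C ∧
    ∀ (u₀ : ℤ) (u : Fin r → ℤ), ¬ (u₀ = 0 ∧ u = 0) →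
      aperCorr1R A u₀ u + aperCorr1R B u₀ u + aperCorr1R C u₀ u = 0

/-- The stacked array `[X; Y; Z]`: a `3 × s₁ × ⋯ × s_r` array whose rows
`0, 1, 2` are `X, Y, Z`, and zero elsewhere. -/
def stack3 {r : ℕ} (X Y Z : (Fin r → ℤ) → ℂ) : ℤ → (Fin r → ℤ) → ℂ :=
  fun i₀ i => if i₀ = 0 then X i else if i₀ = 1 then Y i else if i₀ = 2 then Z i else 0

noncomputable def crossC {r : ℕ} (X Y : (Fin r → ℤ) → ℂ) (u : Fin r → ℤ) : ℂ :=
  ∑' i, X i * (starRingEnd ℂ) (Y (i + u))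

lemma crossC_self {r : ℕ} (X : (Fin r → ℤ) → ℂ) (u : Fin r → ℤ) :
    crossC X X u = aperCorrArr X u := rfl

lemma crossC_zero_right {r : ℕ} (X Y : (Fin r → ℤ) → ℂ) (u : Fin r → ℤ)
    (hY : ∀ i, Y i = 0) : crossC X Y u = 0 := by
  unfold crossC; simp [hY]

lemma crossC_smul {r : ℕ} (a b : ℂ) (X Y : (Fin r → ℤ) → ℂ) (u : Fin r → ℤ) :
    crossC (fun i => a * X i) (fun i => b * Y i) u
      = (a * (starRingEnd ℂ) b) * crossC X Y u := by
  unfold crossC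
  rw [← tsum_mul_left]
  congr 1; funext i; simp only [map_mul]; ring

lemma crossC_smul_right {r : ℕ} (b : ℂ) (X Y : (Fin r → ℤ) → ℂ) (u : Fin r → ℤ) :
    crossC X (fun i => b * Y i) u = ((starRingEnd ℂ) b) * crossC X Y u := by
  unfold crossC
  rw [← tsum_mul_left]
  congr 1; funext i; simp only [map_mul]; ring

lemma crossC_smul_left {r : ℕ} (a : ℂ) (X Y : (Fin r → ℤ) → ℂ) (u : Fin r → ℤ) :
    crossC (fun i => a * X i) Y u = a * crossC X Y u := by
  unfold crossC
  rw [← tsum_mul_left]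
  congr 1; funext i; ring

noncomputable def boxS {r : ℕ} (s : Fin r → ℕ) : Finset (Fin r → ℤ) :=
  Fintype.piFinset fun k => Finset.Ico (0 : ℤ) (s k)

lemma mem_boxS {r : ℕ} {s : Fin r → ℕ} {i : Fin r → ℤ} :
    i ∈ boxS s ↔ ∀ k, 0 ≤ i k ∧ i k < (s k : ℤ) := by
  simp [boxS, Fintype.mem_piFinset, Finset.mem_Ico]

lemma stack3_zero {r : ℕ} (X Y Z : (Fin r → ℤ) → ℂ) : stack3 X Y Z 0 = X := by
  funext i; simp [stack3]

lemma stack3_one {r : ℕ} (X Y Z : (Fin r → ℤ) → ℂ) : stack3 X Y Z 1 = Y := by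
  funext i; simp [stack3]

lemma stack3_two {r : ℕ} (X Y Z : (Fin r → ℤ) → ℂ) : stack3 X Y Z 2 = Z := by
  funext i; simp [stack3]

lemma crossC_stack3_ne {r : ℕ} (X Y Z W : (Fin r → ℤ) → ℂ) (j : ℤ)
    (h0 : j ≠ 0) (h1 : j ≠ 1) (h2 : j ≠ 2) (u : Fin r → ℤ) :
    crossC W (stack3 X Y Z j) u = 0 :=
  crossC_zero_right _ _ u (fun i => by simp [stack3, h0, h1, h2])

lemma aperCorr1R_stack3 {r : ℕ} (s : Fin r → ℕ) (X Y Z : (Fin r → ℤ) → ℂ)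
    (hX : ∀ i ∉ boxS s, X i = 0) (hY : ∀ i ∉ boxS s, Y i = 0)
    (hZ : ∀ i ∉ boxS s, Z i = 0) (u₀ : ℤ) (u : Fin r → ℤ) :
    aperCorr1R (stack3 X Y Z) u₀ u =
      crossC (stack3 X Y Z 0) (stack3 X Y Z (0 + u₀)) u +
      crossC (stack3 X Y Z 1) (stack3 X Y Z (1 + u₀)) u +
      crossC (stack3 X Y Z 2) (stack3 X Y Z (2 + u₀)) u := by
  set D := stack3 X Y Z with hD
  have hDbox : ∀ (j : ℤ) (i : Fin r → ℤ), i ∉ boxS s → D j i = 0 := by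
    intro j i hi
    simp only [hD, stack3]
    split_ifs <;> simp [hX i hi, hY i hi, hZ i hi]
  have hDrow : ∀ (j : ℤ), j ∉ ({0, 1, 2} : Finset ℤ) → ∀ i, D j i = 0 := by
    intro j hj i
    simp only [Finset.mem_insert, Finset.mem_singleton] at hj
    push_neg at hj
    simp [hD, stack3, hj.1, hj.2.1, hj.2.2]
  have key : aperCorr1R D u₀ u
      = ∑ p ∈ (({0, 1, 2} : Finset ℤ) ×ˢ boxS s),
          D p.1 p.2 * (starRingEnd ℂ) (D (p.1 + u₀) (p.2 + u)) := by
    rw [aperCorr1R]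
    apply tsum_eq_sum
    intro p hp
    rw [Finset.mem_product] at hp
    push_neg at hp
    by_cases h1 : p.1 ∈ ({0, 1, 2} : Finset ℤ)
    · rw [hDbox p.1 p.2 (hp h1), zero_mul]
    · rw [hDrow p.1 h1 p.2, zero_mul]
  rw [key, Finset.sum_product]
  have inner : ∀ j : ℤ, ∑ i ∈ boxS s, D j i * (starRingEnd ℂ) (D (j + u₀) (i + u))
      = crossC (D j) (D (j + u₀)) u := by
    intro j
    rw [crossC]
    exact (tsum_eq_sum (fun i hi => by rw [hDbox j i hi, zero_mul])).symm
  rw [show ({0, 1, 2} : Finset ℤ) = insert 0 (insert 1 {2}) from rfl,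
    Finset.sum_insert (by decide), Finset.sum_insert (by decide), Finset.sum_singleton,
    inner 0, inner 1, inner 2]
  ring

lemma omega_prim : IsPrimitiveRoot ω 3 := by
  have := Complex.isPrimitiveRoot_exp 3 (by norm_num)
  convert this using 2
  simp [ω]

lemma omega_pow_three : ω ^ 3 = 1 := omega_prim.pow_eq_one

lemma omega_sum : 1 + ω + ω ^ 2 = 0 := by
  have := omega_prim.geom_sum_eq_zero (by norm_num)
  simpa [Finset.sum_range_succ] using this

lemma mul_conj_omega : ω * (starRingEnd ℂ) ω = 1 := by
  rw [ω, ← Complex.exp_conj, ← Complex.exp_add]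
  rw [show ((starRingEnd ℂ) (2 * Real.pi * Complex.I / 3)) = -(2 * Real.pi * Complex.I / 3) by
    simp [map_div₀, Complex.conj_I, map_ofNat]; ring]
  simp

lemma omega_ne_zero : ω ≠ 0 := by
  intro h
  have := omega_pow_three
  rw [h] at this; norm_num at this

lemma conj_omega : (starRingEnd ℂ) ω = ω ^ 2 := by
  have h1 : ω * ω ^ 2 = 1 := by rw [← pow_succ']; exact omega_pow_three
  exact mul_left_cancel₀ omega_ne_zero (mul_conj_omega.trans h1.symm)

lemma conj_omega_sq : (starRingEnd ℂ) (ω ^ 2) = ω := by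
  rw [map_pow, conj_omega, ← pow_mul]
  calc ω ^ 4 = ω ^ 3 * ω := by ring
  _ = ω := by rw [omega_pow_three, one_mul]

lemma omega_mul_mem {x : ℂ} (hx : x ∈ ({1, ω, ω ^ 2} : Set ℂ)) :
    ω * x ∈ ({1, ω, ω ^ 2} : Set ℂ) := by
  have h3 : ω * ω ^ 2 = 1 := by rw [← pow_succ']; exact omega_pow_three
  simp only [Set.mem_insert_iff, Set.mem_singleton_iff] at hx ⊢
  rcases hx with h | h | h <;> rw [h]
  · right; left; rw [mul_one]
  · right; right; rw [sq]
  · left; exact h3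

lemma omega_sq_mul_mem {x : ℂ} (hx : x ∈ ({1, ω, ω ^ 2} : Set ℂ)) :
    ω ^ 2 * x ∈ ({1, ω, ω ^ 2} : Set ℂ) := by
  have h3 : ω ^ 2 * ω = 1 := by rw [← pow_succ]; exact omega_pow_three
  have h4 : ω ^ 2 * ω ^ 2 = ω := by
    calc ω ^ 2 * ω ^ 2 = ω ^ 3 * ω := by ring
    _ = ω := by rw [omega_pow_three, one_mul]
  simp only [Set.mem_insert_iff, Set.mem_singleton_iff] at hx ⊢
  rcases hx with h | h | h <;> rw [h]
  · right; right; rw [mul_one]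
  · left; exact h3
  · right; left; exact h4

lemma isThreePhaseArr_omega_smul {r : ℕ} {s : Fin r → ℕ} {B : (Fin r → ℤ) → ℂ}
    (hB : IsThreePhaseArr r s B) : IsThreePhaseArr r s (fun i => ω * B i) := by
  refine ⟨fun i hi => ?_, fun i hi => omega_mul_mem (hB.2 i hi)⟩
  simp only []
  rw [hB.1 i hi, mul_zero]

lemma isThreePhaseArr_omega_sq_smul {r : ℕ} {s : Fin r → ℕ} {B : (Fin r → ℤ) → ℂ}
    (hB : IsThreePhaseArr r s B) : IsThreePhaseArr r s (fun i => ω ^ 2 * B i) := by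
  refine ⟨fun i hi => ?_, fun i hi => omega_sq_mul_mem (hB.2 i hi)⟩
  simp only []
  rw [hB.1 i hi, mul_zero]

lemma isThreePhase1R_stack3 {r : ℕ} {s : Fin r → ℕ} {X Y Z : (Fin r → ℤ) → ℂ}
    (hX : IsThreePhaseArr r s X) (hY : IsThreePhaseArr r s Y)
    (hZ : IsThreePhaseArr r s Z) : IsThreePhase1R 3 s (stack3 X Y Z) := by
  constructor
  · intro i₀ i hi
    rcases hi with h0 | hk
    · have h : i₀ ≠ 0 ∧ i₀ ≠ 1 ∧ i₀ ≠ 2 := by push_cast at h0; omega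
      simp [stack3, h.1, h.2.1, h.2.2]
    · simp only [stack3]
      split_ifs <;> first | rfl | exact hX.1 i hk | exact hY.1 i hk | exact hZ.1 i hk
  · intro i₀ i h0 h3 hin
    have h : i₀ = 0 ∨ i₀ = 1 ∨ i₀ = 2 := by push_cast at h3; omega
    rcases h with h | h | h <;> subst h
    · simpa [stack3] using hX.2 i hin
    · simpa [stack3] using hY.2 i hin
    · simpa [stack3] using hZ.2 i hin

lemma zero_outside_boxS {r : ℕ} {s : Fin r → ℕ} {A : (Fin r → ℤ) → ℂ}
    (hA : ∀ i : Fin r → ℤ, (∃ k, i k < 0 ∨ (s k : ℤ) ≤ i k) → A i = 0) :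
    ∀ i ∉ boxS s, A i = 0 := by
  intro i hi
  apply hA
  rw [mem_boxS] at hi
  push_neg at hi
  obtain ⟨k, hk⟩ := hi
  refine ⟨k, ?_⟩
  omega

lemma stack3_other {r : ℕ} {X Y Z : (Fin r → ℤ) → ℂ} (j : ℤ)
    (h0 : j ≠ 0) (h1 : j ≠ 1) (h2 : j ≠ 2) :
    stack3 X Y Z j = fun _ => 0 := by
  funext i; simp [stack3, h0, h1, h2]

lemma crossC_fun_zero {r : ℕ} (X : (Fin r → ℤ) → ℂ) (u : Fin r → ℤ) :
    crossC X (fun _ => 0) u = 0 :=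
  crossC_zero_right _ _ u (fun _ => rfl)

/-- (Increase dimension.) If `A, B, C` form a 3-phase `s₁ × ⋯ × s_r` Golay
array triad, then `U = [A; B; C]`, `V = [A; ωB; ω²C]`, `W = [A; ω²B; ωC]`
form a 3-phase `3 × s₁ × ⋯ × s_r` Golay array triad. -/
theorem increase_dimension (r : ℕ) (s : Fin r → ℕ) (A B C : (Fin r → ℤ) → ℂ)
    (h : GolayArrTriad r s A B C) :
    GolayTriad1R 3 s (stack3 A B C)
      (stack3 A (fun i => ω * B i) (fun i => ω ^ 2 * C i))
      (stack3 A (fun i => ω ^ 2 * B i) (fun i => ω * C i)) := by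
  obtain ⟨hA, hB, hC, hcorr⟩ := h
  have hAb : ∀ i ∉ boxS s, A i = 0 := zero_outside_boxS hA.1
  have hBb : ∀ i ∉ boxS s, B i = 0 := zero_outside_boxS hB.1
  have hCb : ∀ i ∉ boxS s, C i = 0 := zero_outside_boxS hC.1
  have hωB : ∀ i ∉ boxS s, (fun i => ω * B i) i = 0 := by
    intro i hi; simp only []; rw [hBb i hi, mul_zero]
  have hω2B : ∀ i ∉ boxS s, (fun i => ω ^ 2 * B i) i = 0 := by
    intro i hi; simp only []; rw [hBb i hi, mul_zero]
  have hωC : ∀ i ∉ boxS s, (fun i => ω * C i) i = 0 := by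
    intro i hi; simp only []; rw [hCb i hi, mul_zero]
  have hω2C : ∀ i ∉ boxS s, (fun i => ω ^ 2 * C i) i = 0 := by
    intro i hi; simp only []; rw [hCb i hi, mul_zero]
  refine ⟨isThreePhase1R_stack3 hA hB hC,
    isThreePhase1R_stack3 hA (isThreePhaseArr_omega_smul hB) (isThreePhaseArr_omega_sq_smul hC),
    isThreePhase1R_stack3 hA (isThreePhaseArr_omega_sq_smul hB) (isThreePhaseArr_omega_smul hC),
    ?_⟩
  intro u₀ u hne
  rw [aperCorr1R_stack3 s A B C hAb hBb hCb u₀ u,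
    aperCorr1R_stack3 s A _ _ hAb hωB hω2C u₀ u,
    aperCorr1R_stack3 s A _ _ hAb hω2B hωC u₀ u]
  by_cases h0 : u₀ = 0
  · subst h0
    have hu : u ≠ 0 := fun hu => hne ⟨rfl, hu⟩
    have hq := hcorr u hu
    rw [show (0:ℤ) + 0 = 0 by norm_num, show (1:ℤ) + 0 = 1 by norm_num,
      show (2:ℤ) + 0 = 2 by norm_num]
    simp only [stack3_zero, stack3_one, stack3_two, crossC_smul,
      conj_omega, conj_omega_sq]
    simp only [crossC_self]
    linear_combination (3:ℂ) * hq
      + 2 * (aperCorrArr B u + aperCorrArr C u) * omega_pow_three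
  by_cases h1 : u₀ = 1
  · subst h1
    rw [show (0:ℤ) + 1 = 1 by norm_num, show (1:ℤ) + 1 = 2 by norm_num,
      show (2:ℤ) + 1 = 3 by norm_num]
    simp only [stack3_zero, stack3_one, stack3_two,
      stack3_other 3 (by decide) (by decide) (by decide), crossC_fun_zero,
      crossC_smul, crossC_smul_left, crossC_smul_right, conj_omega, conj_omega_sq]
    linear_combination (crossC A B u + crossC B C u) * omega_sum
      + ω * crossC B C u * omega_pow_three
  by_cases h2 : u₀ = 2
  · subst h2
    rw [show (0:ℤ) + 2 = 2 by norm_num, show (1:ℤ) + 2 = 3 by norm_num,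
      show (2:ℤ) + 2 = 4 by norm_num]
    simp only [stack3_zero, stack3_one, stack3_two,
      stack3_other 3 (by decide) (by decide) (by decide),
      stack3_other 4 (by decide) (by decide) (by decide), crossC_fun_zero,
      crossC_smul, crossC_smul_left, crossC_smul_right, conj_omega, conj_omega_sq]
    linear_combination crossC A C u * omega_sum
  by_cases h3 : u₀ = -1
  · subst h3
    rw [show (0:ℤ) + -1 = -1 by norm_num, show (1:ℤ) + -1 = 0 by norm_num,
      show (2:ℤ) + -1 = 1 by norm_num]
    simp only [stack3_zero, stack3_one, stack3_two,
      stack3_other (-1) (by decide) (by decide) (by decide), crossC_fun_zero,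
      crossC_smul, crossC_smul_left, crossC_smul_right, conj_omega, conj_omega_sq]
    linear_combination (crossC B A u + crossC C B u) * omega_sum
      + ω * crossC C B u * omega_pow_three
  by_cases h4 : u₀ = -2
  · subst h4
    rw [show (0:ℤ) + -2 = -2 by norm_num, show (1:ℤ) + -2 = -1 by norm_num,
      show (2:ℤ) + -2 = 0 by norm_num]
    simp only [stack3_zero, stack3_one, stack3_two,
      stack3_other (-2) (by decide) (by decide) (by decide),
      stack3_other (-1) (by decide) (by decide) (by decide), crossC_fun_zero,
      crossC_smul, crossC_smul_left, crossC_smul_right, conj_omega, conj_omega_sq]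
    linear_combination crossC C A u * omega_sum
  · rw [crossC_stack3_ne A B C _ (0 + u₀) (by omega) (by omega) (by omega),
      crossC_stack3_ne A B C _ (1 + u₀) (by omega) (by omega) (by omega),
      crossC_stack3_ne A B C _ (2 + u₀) (by omega) (by omega) (by omega),
      crossC_stack3_ne A _ _ _ (0 + u₀) (by omega) (by omega) (by omega),
      crossC_stack3_ne A _ _ _ (1 + u₀) (by omega) (by omega) (by omega),
      crossC_stack3_ne A _ _ _ (2 + u₀) (by omega) (by omega) (by omega),
      crossC_stack3_ne A _ _ _ (0 + u₀) (by omega) (by omega) (by omega),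
      crossC_stack3_ne A _ _ _ (1 + u₀) (by omega) (by omega) (by omega),
      crossC_stack3_ne A _ _ _ (2 + u₀) (by omega) (by omega) (by omega)]
    norm_num
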